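/- (Proposition 2.) The poset (ℰ^N, ⊑) is a geometric lattice (i.e., a finite atomistic semimodular lattice) in which the meet of any two embedded subsets (A,P),(B,Q) ∈ ℰ^N is their componentwise meet (A ∩ B, P ∧ Q) and their join is cl((A ∪ B, P ∨ Q)), the closure of their componentwise join. -/

import Mathlib

open scoped BigOperators

/-- `modp n A` is the modular partition `P^A_⊥` of `Fin n` whose unique (possibly)
non-singleton block is `A`, all other blocks being singletons. -/
def modp (n : ℕ) (A : Set (Fin n)) : Setoid (Fin n) where
  r x y := x = y ∨ (x ∈ A ∧ y ∈ A)
  iseqv := by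
    refine ⟨fun _ => Or.inl rfl, ?_, ?_⟩
    · rintro x y (rfl | ⟨hx, hy⟩)
      · exact Or.inl rfl
      · exact Or.inr ⟨hy, hx⟩
    · rintro x y z (rfl | ⟨hx, hy⟩) h
      · exact h
      · rcases h with rfl | ⟨hy', hz⟩
        · exact Or.inr ⟨hx, hy⟩
        · exact Or.inr ⟨hx, hz⟩

/-- The product `X^N = 2^N × 𝒫^N` of the subset lattice and the partition lattice,
ordered componentwise. -/
abbrev XN (n : ℕ) := Set (Fin n) × Setoid (Fin n)

/-- The closure operator `cl` on `X^N`:  `cl(∅,P) = (∅,P)` and, for `A ≠ ∅`,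
`cl(A,P) = (Ā, P ⊔ P^A_⊥)` where `Ā` is the block of `P ⊔ P^A_⊥` containing `A`. -/
def EmbClosure (n : ℕ) (x : XN n) : XN n :=
  ({y | ∃ a ∈ x.1, (x.2 ⊔ modp n x.1) y a}, x.2 ⊔ modp n x.1)

/-- An embedded subset is a pair that coincides with its closure. -/
def IsEmbedded (n : ℕ) (x : XN n) : Prop := EmbClosure n x = x

/-- The lattice `ℰ^N` of embedded subsets, with the induced order. -/
abbrev Emb (n : ℕ) := {x : XN n // IsEmbedded n x}

lemma modp_le_of_subsingleton {n : ℕ} {A : Set (Fin n)} (h : A.Subsingleton)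
    (Q : Setoid (Fin n)) : modp n A ≤ Q := by
  rw [Setoid.le_def]
  intro x y hxy
  rcases hxy with rfl | ⟨hx, hy⟩
  · exact Q.refl' x
  · obtain rfl := h hx hy
    exact Q.refl' x

lemma modp_eq_bot_of_subsingleton {n : ℕ} {A : Set (Fin n)} (h : A.Subsingleton) :
    modp n A = ⊥ :=
  le_antisymm (modp_le_of_subsingleton h ⊥) bot_le

lemma embedded_empty (n : ℕ) (Q : Setoid (Fin n)) : IsEmbedded n (∅, Q) := by
  unfold IsEmbedded EmbClosure
  refine Prod.ext ?_ ?_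
  · simp
  · simpa using sup_eq_left.mpr (modp_le_of_subsingleton Set.subsingleton_empty Q)

lemma embedded_univ_top (n : ℕ) : IsEmbedded n (Set.univ, ⊤) := by
  unfold IsEmbedded EmbClosure
  refine Prod.ext ?_ ?_
  · ext y
    simp only [Set.mem_setOf_eq, Set.mem_univ, iff_true]
    exact ⟨y, trivial, Setoid.refl' _ y⟩
  · exact sup_eq_left.mpr le_top

lemma embedded_singleton (n : ℕ) (i : Fin n) : IsEmbedded n ({i}, ⊥) := by
  have hb : modp n ({i} : Set (Fin n)) = ⊥ :=
    modp_eq_bot_of_subsingleton Set.subsingleton_singleton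
  unfold IsEmbedded EmbClosure
  refine Prod.ext ?_ ?_
  · ext y
    simp only [Set.mem_setOf_eq, hb, sup_idem, Set.mem_singleton_iff]
    constructor
    · rintro ⟨a, ha, hrel⟩
      subst ha
      first
        | have h' : ((⊥ : Setoid (Fin n)) ⊔ modp n {a}) y a := hrel
          rw [hb, sup_idem] at h'
          first
            | simpa [Setoid.bot_def] using h'
            | exact h'
            | simpa using h'
        | have h' : ((⊥ : Setoid (Fin n)) ⊔ modp n {i}) y i := hrel
          rw [hb, sup_idem] at h'
          first
            | simpa [Setoid.bot_def] using h'
            | exact h'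
            | simpa using h'
    · rintro rfl
      exact ⟨y, rfl, Setoid.refl' _ y⟩
  · simp [hb]

/-- The bottom element `(∅, P_⊥)` of `ℰ^N`. -/
def botE (n : ℕ) : Emb n := ⟨(∅, ⊥), embedded_empty n ⊥⟩

/-- The top element `(N, P^⊤)` of `ℰ^N`. -/
def topE (n : ℕ) : Emb n := ⟨(Set.univ, ⊤), embedded_univ_top n⟩

/-- The atom `({i}, P_⊥)` of `ℰ^N`. -/
def atomS (n : ℕ) (i : Fin n) : Emb n := ⟨({i}, ⊥), embedded_singleton n i⟩

/-- The atom `(∅, [ij])` of `ℰ^N`, where `[ij]` is the atom of the partition lattice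
whose unique non-singleton block is the pair `{i, j}`. -/
def atomP (n : ℕ) (i j : Fin n) : Emb n := ⟨(∅, modp n {i, j}), embedded_empty n _⟩

/-- A pair is an atom candidate: of the form `({i},P_⊥)` or `(∅,[ij])` with `i ≠ j`. -/
def IsAtomPair (n : ℕ) (a : XN n) : Prop :=
  (∃ i : Fin n, a = ({i}, ⊥)) ∨ ∃ i j : Fin n, i ≠ j ∧ a = (∅, modp n {i, j})

/-- The number of blocks `|P|` of a partition. -/
noncomputable def numBlocks {α : Type*} (P : Setoid α) : ℕ := P.classes.ncard

/-- The rank function `r(A,P) = (n − |P|) + min{|A|,1}` of `ℰ^N`. -/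
noncomputable def erank (n : ℕ) (x : XN n) : ℕ := (n - numBlocks x.2) + min x.1.ncard 1

/-- The partition `Q^S` of `S` induced by a partition `Q` of `N`. -/
def indPart {n : ℕ} (S : Set (Fin n)) (Q : Setoid (Fin n)) : Setoid S :=
  Setoid.comap Subtype.val Q

/-- `mu` is the Möbius function of the (finite) poset `α`. -/
def IsMobius {α : Type*} [PartialOrder α] (mu : α → α → ℤ) : Prop :=
  (∀ x, mu x x = 1) ∧
  (∀ x y, ¬x ≤ y → mu x y = 0) ∧
  (∀ x y, x < y → mu x y = -∑ᶠ z ∈ Set.Ico x y, mu x z)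

section MyAux
variable {n : ℕ}

lemma modp_rel_iff {A : Set (Fin n)} {x y : Fin n} :
    modp n A x y ↔ x = y ∨ (x ∈ A ∧ y ∈ A) := Iff.rfl

lemma modp_mono {A B : Set (Fin n)} (h : A ⊆ B) : modp n A ≤ modp n B := by
  rw [Setoid.le_def]; rintro x y (rfl | ⟨hx, hy⟩)
  · exact (modp n B).refl' x
  · exact Or.inr ⟨h hx, h hy⟩

lemma modp_le_of_forall {A : Set (Fin n)} {Q : Setoid (Fin n)}
    (h : ∀ a ∈ A, ∀ b ∈ A, Q a b) : modp n A ≤ Q := by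
  rw [Setoid.le_def]; rintro x y (rfl | ⟨hx, hy⟩)
  · exact Q.refl' x
  · exact h x hx y hy

lemma le_of_modp_le {A : Set (Fin n)} {Q : Setoid (Fin n)} (h : modp n A ≤ Q)
    {a b : Fin n} (ha : a ∈ A) (hb : b ∈ A) : Q a b := h (Or.inr ⟨ha, hb⟩)

lemma IsEmbedded.sup_eq {x : XN n} (h : IsEmbedded n x) : x.2 ⊔ modp n x.1 = x.2 :=
  congrArg Prod.snd h

lemma IsEmbedded.modp_le {x : XN n} (h : IsEmbedded n x) : modp n x.1 ≤ x.2 := by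
  conv_rhs => rw [← h.sup_eq]
  exact le_sup_right

lemma IsEmbedded.mem_iff {x : XN n} (h : IsEmbedded n x) {z : Fin n} :
    z ∈ x.1 ↔ ∃ a ∈ x.1, x.2 z a := by
  have h1 : {y | ∃ a ∈ x.1, (x.2 ⊔ modp n x.1) y a} = x.1 := congrArg Prod.fst h
  rw [h.sup_eq] at h1
  exact (Set.ext_iff.1 h1 z).symm

lemma embedded_class_eq {S : Setoid (Fin n)} {E : Set (Fin n)}
    (hE : IsEmbedded n (E, S)) {b : Fin n} (hb : b ∈ E) : E = {z | S z b} := by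
  ext z
  simp only [Set.mem_setOf_eq]
  constructor
  · intro hz
    obtain ⟨a, ha, hza⟩ := hE.mem_iff.1 hz
    exact S.trans' hza (le_of_modp_le hE.modp_le ha hb)
  · intro hz
    exact hE.mem_iff.2 ⟨b, hb, hz⟩

lemma le_embClosure (x : XN n) : x ≤ EmbClosure n x :=
  Prod.le_def.2 ⟨fun a ha => ⟨a, ha, (x.2 ⊔ modp n x.1).refl' a⟩, le_sup_left⟩

lemma embClosure_mono {x y : XN n} (h : x ≤ y) : EmbClosure n x ≤ EmbClosure n y := by
  have h2 : x.2 ⊔ modp n x.1 ≤ y.2 ⊔ modp n y.1 := sup_le_sup h.2 (modp_mono h.1)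
  refine Prod.le_def.2 ⟨?_, h2⟩
  rintro z ⟨a, ha, hrel⟩
  exact ⟨a, h.1 ha, h2 hrel⟩

lemma isEmbedded_embClosure (x : XN n) : IsEmbedded n (EmbClosure n x) := by
  set P' := x.2 ⊔ modp n x.1 with hP'
  set C := {y | ∃ a ∈ x.1, P' y a} with hC
  have hmle : modp n C ≤ P' := by
    apply modp_le_of_forall
    rintro a ⟨a', ha', hra⟩ b ⟨b', hb', hrb⟩
    have hab : P' a' b' := by
      rcases eq_or_ne a' b' with rfl | hne
      · exact P'.refl' a'
      · exact (le_sup_right : modp n x.1 ≤ P') (Or.inr ⟨ha', hb'⟩)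
    exact P'.trans' hra (P'.trans' hab (P'.symm' hrb))
  have hsup : P' ⊔ modp n C = P' := sup_eq_left.2 hmle
  refine Prod.ext ?_ ?_
  · show {y | ∃ a ∈ C, (P' ⊔ modp n C) y a} = C
    rw [hsup]
    ext z
    constructor
    · rintro ⟨a, ⟨a', ha', hra⟩, hza⟩
      exact ⟨a', ha', P'.trans' hza hra⟩
    · intro hz
      exact ⟨z, hz, P'.refl' z⟩
  · exact hsup

lemma embClosure_le_of_le {x z : XN n} (h : x ≤ z) (hz : IsEmbedded n z) :
    EmbClosure n x ≤ z := by
  have := embClosure_mono h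
  rwa [hz] at this

lemma embClosure_sup_left (u v : XN n) :
    EmbClosure n (EmbClosure n u ⊔ v) = EmbClosure n (u ⊔ v) := by
  apply le_antisymm
  · have h1 : EmbClosure n u ⊔ v ≤ EmbClosure n (u ⊔ v) :=
      sup_le (embClosure_mono le_sup_left) (le_trans le_sup_right (le_embClosure _))
    exact embClosure_le_of_le h1 (isEmbedded_embClosure _)
  · exact embClosure_mono (sup_le_sup_right (le_embClosure u) v)

end MyAux
section MyAux2
variable {n : ℕ}

def supPair (Q : Setoid (Fin n)) (u v : Fin n) : Setoid (Fin n) where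
  r x y := Q x y ∨ (Q x u ∧ Q v y) ∨ (Q x v ∧ Q u y)
  iseqv := by
    refine ⟨fun x => Or.inl (Q.refl' x), ?_, ?_⟩
    · rintro x y (h | ⟨h1, h2⟩ | ⟨h1, h2⟩)
      · exact Or.inl (Q.symm' h)
      · exact Or.inr (Or.inr ⟨Q.symm' h2, Q.symm' h1⟩)
      · exact Or.inr (Or.inl ⟨Q.symm' h2, Q.symm' h1⟩)
    · rintro x y z (h | ⟨h1, h2⟩ | ⟨h1, h2⟩) (h' | ⟨h1', h2'⟩ | ⟨h1', h2'⟩)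
      · exact Or.inl (Q.trans' h h')
      · exact Or.inr (Or.inl ⟨Q.trans' h h1', h2'⟩)
      · exact Or.inr (Or.inr ⟨Q.trans' h h1', h2'⟩)
      · exact Or.inr (Or.inl ⟨h1, Q.trans' h2 h'⟩)
      · exact Or.inl (Q.trans' h1 (Q.trans' (Q.symm' (Q.trans' h2 h1')) h2'))
      · exact Or.inl (Q.trans' h1 h2')
      · exact Or.inr (Or.inr ⟨h1, Q.trans' h2 h'⟩)
      · exact Or.inl (Q.trans' h1 h2')
      · exact Or.inl (Q.trans' h1 (Q.trans' (Q.symm' (Q.trans' h2 h1')) h2'))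

lemma sup_modp_pair {Q : Setoid (Fin n)} {u v : Fin n} :
    Q ⊔ modp n {u, v} = supPair Q u v := by
  apply le_antisymm
  · apply sup_le
    · rw [Setoid.le_def]; intro x y h; exact Or.inl h
    · rw [Setoid.le_def]; rintro x y (rfl | ⟨hx, hy⟩)
      · exact Or.inl (Q.refl' _)
      · simp only [Set.mem_insert_iff, Set.mem_singleton_iff] at hx hy
        rcases hx with rfl | rfl <;> rcases hy with rfl | rfl
        · exact Or.inl (Q.refl' _)
        · exact Or.inr (Or.inl ⟨Q.refl' _, Q.refl' _⟩)
        · exact Or.inr (Or.inr ⟨Q.refl' _, Q.refl' _⟩)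
        · exact Or.inl (Q.refl' _)
  · rw [Setoid.le_def]
    have hQ : Q ≤ Q ⊔ modp n {u, v} := le_sup_left
    have huv : (Q ⊔ modp n {u, v}) u v :=
      (le_sup_right : modp n {u,v} ≤ _)
        (Or.inr ⟨Set.mem_insert _ _, Set.mem_insert_of_mem _ rfl⟩)
    rintro x y (h | ⟨h1, h2⟩ | ⟨h1, h2⟩)
    · exact hQ h
    · exact Setoid.trans' _ (hQ h1) (Setoid.trans' _ huv (hQ h2))
    · exact Setoid.trans' _ (hQ h1) (Setoid.trans' _ (Setoid.symm' _ huv) (hQ h2))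

lemma sup_modp_rel {Q : Setoid (Fin n)} {u v x y : Fin n} :
    (Q ⊔ modp n {u, v}) x y ↔ Q x y ∨ (Q x u ∧ Q v y) ∨ (Q x v ∧ Q u y) := by
  rw [sup_modp_pair]; exact Iff.rfl

lemma sup_modp_cover {Q S : Setoid (Fin n)} {u v : Fin n} (huv : ¬ Q u v)
    (h1 : Q ≤ S) (h2 : S ≤ Q ⊔ modp n {u, v}) : S = Q ∨ S = Q ⊔ modp n {u, v} := by
  by_cases hSQ : S = Q
  · exact Or.inl hSQ
  right
  have hex : ∃ x y, S x y ∧ ¬ Q x y := by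
    by_contra hc
    push_neg at hc
    refine hSQ (le_antisymm ?_ h1)
    rw [Setoid.le_def]
    intro x y h
    exact hc x y h
  obtain ⟨x, y, hS, hQxy⟩ := hex
  have hR := sup_modp_rel.1 (h2 hS)
  have hSuv : S u v := by
    rcases hR with h | ⟨hxu, hvy⟩ | ⟨hxv, huy⟩
    · exact absurd h hQxy
    · exact S.trans' (S.trans' (S.symm' (h1 hxu)) hS) (S.symm' (h1 hvy))
    · exact S.trans' (h1 huy) (S.trans' (S.symm' hS) (h1 hxv))
  refine le_antisymm h2 (sup_le h1 (modp_le_of_forall ?_))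
  intro a ha b hb
  simp only [Set.mem_insert_iff, Set.mem_singleton_iff] at ha hb
  rcases ha with rfl | rfl <;> rcases hb with rfl | rfl
  · exact S.refl' _
  · exact hSuv
  · exact S.symm' hSuv
  · exact S.refl' _

end MyAux2
section MyAux3
variable {n : ℕ}

lemma emb_val_eta (w : Emb n) : IsEmbedded n (w.val.1, w.val.2) := by
  rw [Prod.mk.eta]; exact w.prop

lemma between_aux (y w : Emb n) {u v b0 : Fin n} (huv : ¬ y.val.2 u v)
    (hb0 : b0 ∈ y.val.1)
    (h1 : y.val ≤ w.val)
    (h2 : w.val ≤ ({z | (y.val.2 ⊔ modp n {u, v}) z b0}, y.val.2 ⊔ modp n {u, v})) :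
    w.val = y.val ∨
      w.val = ({z | (y.val.2 ⊔ modp n {u, v}) z b0}, y.val.2 ⊔ modp n {u, v}) := by
  have hS1 : y.val.2 ≤ w.val.2 := h1.2
  have hS2 : w.val.2 ≤ y.val.2 ⊔ modp n {u, v} := h2.2
  have hb0E : b0 ∈ w.val.1 := h1.1 hb0
  rcases sup_modp_cover huv hS1 hS2 with hS | hS
  · left
    refine Prod.ext ?_ hS
    rw [embedded_class_eq (emb_val_eta w) hb0E, embedded_class_eq (emb_val_eta y) hb0, hS]
  · right
    refine Prod.ext ?_ hS
    rw [embedded_class_eq (emb_val_eta w) hb0E, hS]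

lemma cover_step (y w : Emb n) (e : XN n) (he : IsAtomPair n e)
    (h1 : y.val ≤ w.val) (h2 : w.val ≤ EmbClosure n (y.val ⊔ e)) :
    w.val = y.val ∨ w.val = EmbClosure n (y.val ⊔ e) := by
  rcases he with ⟨i, rfl⟩ | ⟨i, j0, hij, rfl⟩
  · -- e = ({i}, ⊥)
    have hsup : y.val ⊔ (({i}, ⊥) : XN n) = (y.val.1 ∪ {i}, y.val.2) := by
      refine Prod.ext ?_ ?_
      · exact congrFun (congrFun Set.sup_eq_union _) _
      · exact sup_bot_eq _
    rw [hsup] at h2 ⊢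
    by_cases hi : i ∈ y.val.1
    · have : y.val.1 ∪ {i} = y.val.1 := by
        apply Set.union_eq_self_of_subset_right
        simpa using hi
      rw [this, Prod.mk.eta, y.prop] at h2 ⊢
      exact Or.inl (le_antisymm h2 h1)
    rcases Set.eq_empty_or_nonempty y.val.1 with hB | ⟨b0, hb0⟩
    · -- B = ∅ : closure is (class of i, Q)
      have hmodp : modp n (y.val.1 ∪ {i}) = modp n {i} := by rw [hB, Set.empty_union]
      have hmb : modp n ({i} : Set (Fin n)) ≤ y.val.2 := by
        apply modp_le_of_forall
        rintro a ha b hb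
        simp only [Set.mem_singleton_iff] at ha hb
        subst ha; subst hb; exact Setoid.refl' _ _
      have hcl : EmbClosure n (y.val.1 ∪ {i}, y.val.2) =
          ({z | y.val.2 z i}, y.val.2) := by
        have h2' : y.val.2 ⊔ modp n (y.val.1 ∪ {i}) = y.val.2 := by
          rw [hmodp]; exact sup_eq_left.2 hmb
        refine Prod.ext ?_ h2'
        show {z | ∃ a ∈ y.val.1 ∪ {i}, (y.val.2 ⊔ modp n (y.val.1 ∪ {i})) z a} = _
        rw [h2', hB, Set.empty_union]
        ext z
        simp only [Set.mem_setOf_eq, Set.mem_singleton_iff, exists_eq_left]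
      rw [hcl] at h2 ⊢
      have hSQ : w.val.2 = y.val.2 := le_antisymm h2.2 h1.2
      rcases Set.eq_empty_or_nonempty w.val.1 with hE | ⟨c0, hc0⟩
      · left
        refine Prod.ext ?_ hSQ
        rw [hE, hB]
      · right
        refine Prod.ext ?_ hSQ
        have hc0i : y.val.2 c0 i := h2.1 hc0
        rw [embedded_class_eq (emb_val_eta w) hc0, hSQ]
        ext z
        simp only [Set.mem_setOf_eq]
        exact ⟨fun h => Setoid.trans' _ h hc0i, fun h => Setoid.trans' _ h (Setoid.symm' _ hc0i)⟩
    · -- B ≠ ∅, i ∉ B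
      have hb0i : ¬ y.val.2 b0 i := by
        intro hrel
        exact hi (y.prop.mem_iff.2 ⟨b0, hb0, Setoid.symm' _ hrel⟩)
      have hR : y.val.2 ⊔ modp n (y.val.1 ∪ {i}) = y.val.2 ⊔ modp n {b0, i} := by
        apply le_antisymm
        · apply sup_le le_sup_left
          apply modp_le_of_forall
          intro a ha b hb
          set T := y.val.2 ⊔ modp n {b0, i} with hT
          have hTQ : y.val.2 ≤ T := le_sup_left
          have hTbi : T b0 i := (le_sup_right : modp n {b0,i} ≤ T)
            (Or.inr ⟨Set.mem_insert _ _, Set.mem_insert_of_mem _ rfl⟩)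
          have key : ∀ c ∈ y.val.1 ∪ {i}, T c i := by
            rintro c (hc | hc)
            · exact Setoid.trans' _ (hTQ (le_of_modp_le y.prop.modp_le hc hb0)) hTbi
            · simp only [Set.mem_singleton_iff] at hc
              subst hc; exact Setoid.refl' _ _
          exact Setoid.trans' _ (key a ha) (Setoid.symm' _ (key b hb))
        · refine sup_le le_sup_left (le_trans (modp_mono ?_) le_sup_right)
          rintro c (rfl | rfl)
          · exact Or.inl hb0
          · exact Or.inr rfl
      have hcl : EmbClosure n (y.val.1 ∪ {i}, y.val.2) =
          ({z | (y.val.2 ⊔ modp n {b0, i}) z b0}, y.val.2 ⊔ modp n {b0, i}) := by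
        refine Prod.ext ?_ ?_
        · show {z | ∃ a ∈ y.val.1 ∪ {i}, (y.val.2 ⊔ modp n (y.val.1 ∪ {i})) z a} = _
          rw [hR]
          set T := y.val.2 ⊔ modp n {b0, i} with hT
          have hTQ : y.val.2 ≤ T := le_sup_left
          have hTbi : T b0 i := (le_sup_right : modp n {b0,i} ≤ T)
            (Or.inr ⟨Set.mem_insert _ _, Set.mem_insert_of_mem _ rfl⟩)
          have key : ∀ c ∈ y.val.1 ∪ {i}, T c b0 := by
            rintro c (hc | hc)
            · exact hTQ (le_of_modp_le y.prop.modp_le hc hb0)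
            · simp only [Set.mem_singleton_iff] at hc
              subst hc; exact Setoid.symm' _ hTbi
          ext z
          simp only [Set.mem_setOf_eq]
          constructor
          · rintro ⟨a, ha, hza⟩
            exact Setoid.trans' _ hza (key a ha)
          · intro hz
            exact ⟨b0, Or.inl hb0, hz⟩
        · exact hR
      rw [hcl] at h2 ⊢
      exact between_aux y w hb0i hb0 h1 h2
  · -- e = (∅, modp n {i, j0})
    have hsup : y.val ⊔ ((∅, modp n {i, j0}) : XN n) =
        (y.val.1, y.val.2 ⊔ modp n {i, j0}) := by
      refine Prod.ext ?_ rfl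
      show y.val.1 ∪ ∅ = y.val.1
      exact Set.union_empty _
    rw [hsup] at h2 ⊢
    by_cases hQij : y.val.2 i j0
    · have hQ' : y.val.2 ⊔ modp n {i, j0} = y.val.2 := by
        apply sup_eq_left.2
        apply modp_le_of_forall
        intro a ha b hb
        simp only [Set.mem_insert_iff, Set.mem_singleton_iff] at ha hb
        rcases ha with rfl | rfl <;> rcases hb with rfl | rfl
        · exact Setoid.refl' _ _
        · exact hQij
        · exact Setoid.symm' _ hQij
        · exact Setoid.refl' _ _
      rw [hQ', Prod.mk.eta, y.prop] at h2 ⊢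
      exact Or.inl (le_antisymm h2 h1)
    · -- ¬ Q i j0
      set Q' := y.val.2 ⊔ modp n {i, j0} with hQ'def
      have hmB : modp n y.val.1 ≤ Q' := le_trans y.prop.modp_le le_sup_left
      have hsupB : Q' ⊔ modp n y.val.1 = Q' := sup_eq_left.2 hmB
      rcases Set.eq_empty_or_nonempty y.val.1 with hB | ⟨b0, hb0⟩
      · have hcl : EmbClosure n (y.val.1, Q') = (∅, Q') := by
          refine Prod.ext ?_ hsupB
          show {z | ∃ a ∈ y.val.1, (Q' ⊔ modp n y.val.1) z a} = ∅
          rw [hB]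
          simp
        rw [hcl] at h2 ⊢
        have hE : w.val.1 = ∅ := Set.subset_empty_iff.1 h2.1
        rcases sup_modp_cover hQij h1.2 h2.2 with hS | hS
        · left
          refine Prod.ext ?_ hS
          rw [hE, hB]
        · right
          exact Prod.ext hE hS
      · have hcl : EmbClosure n (y.val.1, Q') = ({z | Q' z b0}, Q') := by
          refine Prod.ext ?_ hsupB
          show {z | ∃ a ∈ y.val.1, (Q' ⊔ modp n y.val.1) z a} = _
          rw [hsupB]
          ext z
          simp only [Set.mem_setOf_eq]
          constructor
          · rintro ⟨a, ha, hza⟩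
            exact Setoid.trans' _ hza ((le_sup_left : y.val.2 ≤ Q')
              (le_of_modp_le y.prop.modp_le ha hb0))
          · intro hz
            exact ⟨b0, hb0, hz⟩
        rw [hcl] at h2 ⊢
        exact between_aux y w hQij hb0 h1 h2

end MyAux3
section MyAux4
variable {n : ℕ}

lemma exists_atom_of_covby {m x : Emb n} (h : m ⋖ x) :
    ∃ e : XN n, IsAtomPair n e ∧ e ≤ x.val ∧ EmbClosure n (m.val ⊔ e) = x.val := by
  have hlt : m.val < x.val := Subtype.coe_lt_coe.2 h.lt
  have hle : m.val ≤ x.val := hlt.le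
  have finish : ∀ e : XN n, IsAtomPair n e → e ≤ x.val →
      EmbClosure n (m.val ⊔ e) ≠ m.val →
      ∃ e' : XN n, IsAtomPair n e' ∧ e' ≤ x.val ∧ EmbClosure n (m.val ⊔ e') = x.val := by
    intro e hat hex hne
    refine ⟨e, hat, hex, ?_⟩
    set W : Emb n := ⟨EmbClosure n (m.val ⊔ e), isEmbedded_embClosure _⟩ with hW
    have hWle : W.val ≤ x.val := embClosure_le_of_le (sup_le hle hex) x.prop
    have hmW : m < W := by
      rw [← Subtype.coe_lt_coe]
      exact lt_of_le_of_ne (le_trans le_sup_left (le_embClosure _)) (Ne.symm hne)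
    have hWx : W ≤ x := Subtype.coe_le_coe.1 hWle
    have hnlt : ¬ W < x := h.2 hmW
    have hWeq : W = x := by
      rcases lt_or_eq_of_le hWx with h' | h'
      · exact absurd h' hnlt
      · exact h'
    exact congrArg Subtype.val hWeq
  by_cases hP : m.val.2 = x.val.2
  · have hA : m.val.1 ≠ x.val.1 := by
      intro hA
      exact hlt.ne (Prod.ext hA hP)
    obtain ⟨i, hiA, hiM⟩ : ∃ i, i ∈ x.val.1 ∧ i ∉ m.val.1 := by
      rcases Set.exists_of_ssubset (ssubset_of_ne_of_subset hA hle.1) with ⟨i, h1, h2⟩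
      exact ⟨i, h1, h2⟩
    refine finish ({i}, ⊥) (Or.inl ⟨i, rfl⟩) ⟨by simpa using hiA, bot_le⟩ ?_
    intro hc
    apply hiM
    have hi' : i ∈ (EmbClosure n (m.val ⊔ (({i}, ⊥) : XN n))).1 := by
      apply (le_embClosure _).1
      exact (le_sup_right : (({i}, ⊥) : XN n) ≤ m.val ⊔ ({i}, ⊥)).1 rfl
    rw [hc] at hi'
    exact hi'
  · have hPle : m.val.2 ≤ x.val.2 := hle.2
    obtain ⟨a, b, hxab, hmab⟩ : ∃ a b, x.val.2 a b ∧ ¬ m.val.2 a b := by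
      by_contra hcon
      push_neg at hcon
      refine hP (le_antisymm hPle ?_)
      rw [Setoid.le_def]
      intro u v h'
      exact hcon u v h'
    have hab : a ≠ b := by
      rintro rfl
      exact hmab (Setoid.refl' _ _)
    have hmodp : modp n {a, b} ≤ x.val.2 := by
      apply modp_le_of_forall
      intro c hc d hd
      simp only [Set.mem_insert_iff, Set.mem_singleton_iff] at hc hd
      rcases hc with rfl | rfl <;> rcases hd with rfl | rfl
      · exact Setoid.refl' _ _
      · exact hxab
      · exact Setoid.symm' _ hxab
      · exact Setoid.refl' _ _
    refine finish (∅, modp n {a, b}) (Or.inr ⟨a, b, hab, rfl⟩)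
      ⟨Set.empty_subset _, hmodp⟩ ?_
    intro hc
    apply hmab
    have h1 : modp n {a, b} ≤ (EmbClosure n (m.val ⊔ ((∅, modp n {a, b}) : XN n))).2 :=
      le_trans (le_sup_right : modp n {a,b} ≤ (m.val ⊔ ((∅, modp n {a, b}) : XN n)).2)
        le_sup_left
    have hrel := h1 (Or.inr ⟨Set.mem_insert _ _, Set.mem_insert_of_mem _ rfl⟩)
    rw [hc] at hrel
    exact hrel

end MyAux4
theorem Emb_geometric (n : ℕ) (hn : 1 ≤ n) :
    Finite (Emb n) ∧
    (∀ x y : Emb n, IsEmbedded n (x.val ⊓ y.val) ∧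
      ∀ z : Emb n, z.val ≤ x.val ⊓ y.val ↔ z ≤ x ∧ z ≤ y) ∧
    (∀ x y : Emb n, IsEmbedded n (EmbClosure n (x.val ⊔ y.val)) ∧
      ∀ z : Emb n, EmbClosure n (x.val ⊔ y.val) ≤ z.val ↔ x ≤ z ∧ y ≤ z) ∧
    (∀ x : Emb n, EmbClosure n (sSup {a : XN n | IsAtomPair n a ∧ a ≤ x.val}) = x.val) ∧
    (∀ x y m j : Emb n, m.val = x.val ⊓ y.val → j.val = EmbClosure n (x.val ⊔ y.val) →
      m ⋖ x → y ⋖ j) := by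
  refine ⟨?_, ?_, ?_, ?_, ?_⟩
  · -- Finite
    have : Finite (Setoid (Fin n)) :=
      Finite.of_injective (fun s => ⇑s)
        (fun a b h => Setoid.ext fun x y => iff_of_eq (congrFun (congrFun h x) y))
    exact Subtype.finite
  · -- meet
    intro x y
    constructor
    · have hm : modp n (x.val ⊓ y.val).1 ≤ (x.val ⊓ y.val).2 := by
        apply modp_le_of_forall
        intro a ha b hb
        exact ⟨le_of_modp_le x.prop.modp_le ha.1 hb.1,
               le_of_modp_le y.prop.modp_le ha.2 hb.2⟩
      have hsup : (x.val ⊓ y.val).2 ⊔ modp n (x.val ⊓ y.val).1 = (x.val ⊓ y.val).2 :=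
        sup_eq_left.2 hm
      refine Prod.ext ?_ hsup
      show {z | ∃ a ∈ (x.val ⊓ y.val).1,
          ((x.val ⊓ y.val).2 ⊔ modp n (x.val ⊓ y.val).1) z a} = (x.val ⊓ y.val).1
      rw [hsup]
      ext z
      constructor
      · rintro ⟨a, ha, hza⟩
        exact ⟨x.prop.mem_iff.2 ⟨a, ha.1, hza.1⟩, y.prop.mem_iff.2 ⟨a, ha.2, hza.2⟩⟩
      · intro hz
        exact ⟨z, hz, Setoid.refl' _ _⟩
    · intro z
      rw [le_inf_iff, Subtype.coe_le_coe, Subtype.coe_le_coe]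
  · -- join
    intro x y
    refine ⟨isEmbedded_embClosure _, fun z => ⟨fun h => ⟨?_, ?_⟩, fun h => ?_⟩⟩
    · exact Subtype.coe_le_coe.1 (le_trans (le_trans le_sup_left (le_embClosure _)) h)
    · exact Subtype.coe_le_coe.1 (le_trans (le_trans le_sup_right (le_embClosure _)) h)
    · exact embClosure_le_of_le
        (sup_le (Subtype.coe_le_coe.2 h.1) (Subtype.coe_le_coe.2 h.2)) z.prop
  · -- atomistic
    intro x
    have hsS : sSup {a : XN n | IsAtomPair n a ∧ a ≤ x.val} = x.val := by
      refine Prod.ext ?_ ?_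
      · rw [Prod.fst_sSup]
        apply le_antisymm
        · apply sSup_le
          rintro t ⟨a, ⟨_, hax⟩, rfl⟩
          exact hax.1
        · intro i hi
          have hmem : (({i}, ⊥) : XN n) ∈ {a : XN n | IsAtomPair n a ∧ a ≤ x.val} :=
            ⟨Or.inl ⟨i, rfl⟩, ⟨by simpa using hi, bot_le⟩⟩
          exact (le_sSup ⟨_, hmem, rfl⟩ :
            ({i} : Set (Fin n)) ≤ sSup (Prod.fst '' {a : XN n | IsAtomPair n a ∧ a ≤ x.val})) rfl
      · rw [Prod.snd_sSup]
        apply le_antisymm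
        · apply sSup_le
          rintro t ⟨a, ⟨_, hax⟩, rfl⟩
          exact hax.2
        · rw [Setoid.le_def]
          intro u v huv
          rcases eq_or_ne u v with rfl | hne
          · exact Setoid.refl' _ _
          · have hmle : modp n {u, v} ≤ x.val.2 := by
              apply modp_le_of_forall
              intro c hc d hd
              simp only [Set.mem_insert_iff, Set.mem_singleton_iff] at hc hd
              rcases hc with rfl | rfl <;> rcases hd with rfl | rfl
              · exact Setoid.refl' _ _
              · exact huv
              · exact Setoid.symm' _ huv
              · exact Setoid.refl' _ _
            have hmem : ((∅, modp n {u, v}) : XN n) ∈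
                {a : XN n | IsAtomPair n a ∧ a ≤ x.val} :=
              ⟨Or.inr ⟨u, v, hne, rfl⟩, ⟨Set.empty_subset _, hmle⟩⟩
            have hle2 : modp n {u, v} ≤
                sSup (Prod.snd '' {a : XN n | IsAtomPair n a ∧ a ≤ x.val}) :=
              le_sSup ⟨_, hmem, rfl⟩
            exact hle2 (Or.inr ⟨Set.mem_insert _ _, Set.mem_insert_of_mem _ rfl⟩)
    rw [hsS]
    exact x.prop
  · -- exchange
    intro x y m j hm hj hc
    obtain ⟨e, hat, hex, hcl⟩ := exists_atom_of_covby hc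
    have hmy : m.val ≤ y.val := by rw [hm]; exact inf_le_right
    have hmey : m.val ⊔ e ⊔ y.val = y.val ⊔ e := by
      rw [sup_comm (m.val ⊔ e) y.val, ← sup_assoc, sup_eq_left.2 hmy]
    have hjy : j.val = EmbClosure n (y.val ⊔ e) := by
      rw [hj, ← hcl, embClosure_sup_left, hmey]
    have hylej : y.val ≤ j.val := by
      rw [hjy]
      exact le_trans le_sup_left (le_embClosure _)
    have hyj : y ≠ j := by
      intro hEq
      have hxj : x.val ≤ j.val := by
        rw [hj]
        exact le_trans le_sup_left (le_embClosure _)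
      have hxy : x.val ≤ y.val := by rw [hEq]; exact hxj
      have hmx : m.val = x.val := by rw [hm]; exact inf_eq_left.2 hxy
      exact hc.lt.ne (Subtype.ext hmx)
    constructor
    · exact lt_of_le_of_ne (Subtype.coe_le_coe.1 hylej) hyj
    · intro c hyc hcj
      have h1 : y.val ≤ c.val := Subtype.coe_le_coe.2 hyc.le
      have h2 : c.val ≤ EmbClosure n (y.val ⊔ e) := by
        rw [← hjy]
        exact Subtype.coe_le_coe.2 hcj.le
      rcases cover_step y c e hat h1 h2 with h | h
      · exact hyc.ne' (Subtype.ext h)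
      · rw [← hjy] at h
        exact hcj.ne (Subtype.ext h)
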